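/- For every real λ ≠ 0 and every real t, letting D be the operator (Df)(λ) = f′(λ)/s(λ): applying D three times to the function λ ↦ s(λ)^{−t} gives (D(D(D(s^{−t}))))(λ) = −t(t+2)·[(t+1)·c(λ)·s(λ)^{−t−4} + 4(t+4)·c(λ)·s(λ)^{−t−6}]. -/

import Mathlib

/-- `sh λ = e^λ - e^{-λ}`. -/
noncomputable def sh (l : ℝ) : ℝ := Real.exp l - Real.exp (-l)

/-- `ch λ = e^λ + e^{-λ}`. -/
noncomputable def ch (l : ℝ) : ℝ := Real.exp l + Real.exp (-l)

/-- The operator `(Df)(λ) = f'(λ)/s(λ)`. -/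
noncomputable def Dop (f : ℝ → ℝ) : ℝ → ℝ := fun l => deriv f l / sh l

lemma sh_ne {x : ℝ} (hx : x ≠ 0) : sh x ≠ 0 := by
  simp only [sh, sub_ne_zero]
  intro h
  exact hx (by have := Real.exp_eq_exp.mp h; linarith)

lemma ch_sq (x : ℝ) : ch x * ch x = sh x * sh x + 4 := by
  have h := Real.exp_ne_zero x
  simp only [sh, ch, Real.exp_neg]
  field_simp
  ring

lemma hasDerivAt_sh (x : ℝ) : HasDerivAt sh (ch x) x := by
  have h2 : HasDerivAt (fun y : ℝ => Real.exp (-y)) (-Real.exp (-x)) x := by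
    simpa [Function.comp_def] using (Real.hasDerivAt_exp (-x)).comp x (hasDerivAt_neg x)
  rw [show sh = fun y => Real.exp y - Real.exp (-y) from rfl]
  simpa [ch, sub_neg_eq_add, Pi.sub_def] using (Real.hasDerivAt_exp x).sub h2

lemma hasDerivAt_ch (x : ℝ) : HasDerivAt ch (sh x) x := by
  have h2 : HasDerivAt (fun y : ℝ => Real.exp (-y)) (-Real.exp (-x)) x := by
    simpa [Function.comp_def] using (Real.hasDerivAt_exp (-x)).comp x (hasDerivAt_neg x)
  rw [show ch = fun y => Real.exp y + Real.exp (-y) from rfl]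
  simpa [sh, sub_eq_add_neg, Pi.add_def] using (Real.hasDerivAt_exp x).add h2

lemma hasDerivAt_shp {x : ℝ} (hx : x ≠ 0) (p : ℝ) :
    HasDerivAt (fun y => sh y ^ p) (p * sh x ^ (p - 1) * ch x) x := by
  simpa [mul_assoc, Function.comp_def] using
    (Real.hasDerivAt_rpow_const (p := p) (Or.inl (sh_ne hx))).comp x (hasDerivAt_sh x)

theorem stmt9 (l : ℝ) (hl : l ≠ 0) (t : ℝ) :
    Dop (Dop (Dop (fun x : ℝ => Real.rpow (sh x) (-t)))) l =
      -t * (t + 2) * ((t + 1) * ch l * Real.rpow (sh l) (-t - 4)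
        + 4 * (t + 4) * ch l * Real.rpow (sh l) (-t - 6)) := by
  -- first application
  have hD1 : ∀ x : ℝ, x ≠ 0 →
      Dop (fun y : ℝ => Real.rpow (sh y) (-t)) x = -t * ch x * sh x ^ (-t - 2) := by
    intro x hx
    have hs := sh_ne hx
    have h := (hasDerivAt_shp hx (-t)).deriv
    simp only [Dop, Real.rpow_def_of_pos]
    rw [show (fun y : ℝ => Real.rpow (sh y) (-t)) = fun y : ℝ => sh y ^ (-t) from rfl, h]
    have e1 : sh x ^ (-t - 1) = sh x ^ (-t - 2) * sh x := by
      rw [show (-t - 1 : ℝ) = (-t - 2) + 1 by ring, Real.rpow_add_one hs]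
    rw [e1]
    field_simp
  -- second application
  have hD2 : ∀ x : ℝ, x ≠ 0 →
      Dop (Dop (fun y : ℝ => Real.rpow (sh y) (-t))) x =
        -t * ((-t - 1) * sh x ^ (-t - 2) + 4 * (-t - 2) * sh x ^ (-t - 4)) := by
    intro x hx
    have hs := sh_ne hx
    have hev : Dop (fun y : ℝ => Real.rpow (sh y) (-t)) =ᶠ[nhds x]
        (fun y : ℝ => -t * ch y * sh y ^ (-t - 2)) := by
      filter_upwards [isOpen_compl_singleton.mem_nhds hx] with y hy using hD1 y hy
    have hDE : HasDerivAt (fun y : ℝ => -t * ch y * sh y ^ (-t - 2))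
        (-t * (sh x * sh x ^ (-t - 2) + ch x * ((-t - 2) * sh x ^ (-t - 2 - 1) * ch x))) x := by
      simpa [mul_assoc] using
        ((hasDerivAt_ch x).mul (hasDerivAt_shp hx (-t - 2))).const_mul (-t)
    have hder : deriv (Dop (fun y : ℝ => Real.rpow (sh y) (-t))) x =
        -t * (sh x * sh x ^ (-t - 2) + ch x * ((-t - 2) * sh x ^ (-t - 2 - 1) * ch x)) := by
      rw [hev.deriv_eq, hDE.deriv]
    simp only [Dop] at hder ⊢
    rw [hder]
    have e3 : sh x ^ (-t - 2 - 1) = sh x ^ (-t - 4) * sh x := by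
      rw [show (-t - 2 - 1 : ℝ) = (-t - 4) + 1 by ring, Real.rpow_add_one hs]
    have e2 : sh x ^ (-t - 2) = sh x ^ (-t - 4) * sh x * sh x := by
      rw [show (-t - 2 : ℝ) = (-t - 4) + 1 + 1 by ring, Real.rpow_add_one hs,
        Real.rpow_add_one hs]
    rw [e3, e2]
    have hch := ch_sq x
    field_simp
    linear_combination (t * (t + 2) * sh x ^ (-t - 4)) * hch
  -- third application
  have hs := sh_ne hl
  have hev : Dop (Dop (fun y : ℝ => Real.rpow (sh y) (-t))) =ᶠ[nhds l]
      (fun y : ℝ => -t * ((-t - 1) * sh y ^ (-t - 2) + 4 * (-t - 2) * sh y ^ (-t - 4))) := by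
    filter_upwards [isOpen_compl_singleton.mem_nhds hl] with y hy using hD2 y hy
  have hDE : HasDerivAt
      (fun y : ℝ => -t * ((-t - 1) * sh y ^ (-t - 2) + 4 * (-t - 2) * sh y ^ (-t - 4)))
      (-t * ((-t - 1) * ((-t - 2) * sh l ^ (-t - 2 - 1) * ch l)
        + 4 * (-t - 2) * ((-t - 4) * sh l ^ (-t - 4 - 1) * ch l))) l := by
    exact (((hasDerivAt_shp hl (-t - 2)).const_mul (-t - 1)).add
      ((hasDerivAt_shp hl (-t - 4)).const_mul (4 * (-t - 2)))).const_mul (-t)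
  have hder : deriv (Dop (Dop (fun y : ℝ => Real.rpow (sh y) (-t)))) l =
      -t * ((-t - 1) * ((-t - 2) * sh l ^ (-t - 2 - 1) * ch l)
        + 4 * (-t - 2) * ((-t - 4) * sh l ^ (-t - 4 - 1) * ch l)) := by
    rw [hev.deriv_eq, hDE.deriv]
  show deriv (Dop (Dop (fun y : ℝ => Real.rpow (sh y) (-t)))) l / sh l = _
  rw [hder]
  have e3 : sh l ^ (-t - 2 - 1) = sh l ^ (-t - 4) * sh l := by
    rw [show (-t - 2 - 1 : ℝ) = (-t - 4) + 1 by ring, Real.rpow_add_one hs]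
  have e5 : sh l ^ (-t - 4 - 1) = sh l ^ (-t - 6) * sh l := by
    rw [show (-t - 4 - 1 : ℝ) = (-t - 6) + 1 by ring, Real.rpow_add_one hs]
  rw [e3, e5]
  show _ = -t * (t + 2) * ((t + 1) * ch l * sh l ^ (-t - 4) + 4 * (t + 4) * ch l * sh l ^ (-t - 6))
  field_simp
  ring
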